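/- Let R, K_ℓ, K_R be smooth with R > 0 near a point ℓ*, set H = 2R'/R, θ⁺ = 2K_R + H, trK = K_ℓ + 2K_R, and suppose there is j ≥ 1 with θ⁺(ℓ*) = ∂_ℓθ⁺(ℓ*) = ⋯ = ∂_ℓ^{j−1}θ⁺(ℓ*) = 0 and ∂_ℓ^{j}θ⁺(ℓ*) > 0. If k is a smooth solution of ∂_ℓ k = −K_ℓ k² − H k + trK near ℓ* with k(ℓ*) = −1, then ∂_ℓ k(ℓ*) = ⋯ = ∂_ℓ^{j} k(ℓ*) = 0 and ∂_ℓ^{j+1} k(ℓ*) > 0; consequently there is ε > 0 with k(ℓ) > −1 for ℓ ∈ (ℓ*, ℓ* + ε). -/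

import Mathlib

open Filter Asymptotics Set Topology

open ContDiff

/-- Mean curvature `H = 2 R' / R` of the spherically symmetric spheres. -/
noncomputable def Hf (R : ℝ → ℝ) : ℝ → ℝ := fun ℓ => 2 * deriv R ℓ / R ℓ

/-- `trK = K_ℓ + 2 K_R`. -/
def trKf (Kl KR : ℝ → ℝ) : ℝ → ℝ := fun ℓ => Kl ℓ + 2 * KR ℓ

/-- Outer expansion `θ⁺ = 2 K_R + H`. -/
noncomputable def thetaPlus (R KR : ℝ → ℝ) : ℝ → ℝ := fun ℓ => 2 * KR ℓ + Hf R ℓ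

/-- On an open set, `iteratedDerivWithin` agrees with `iteratedDeriv`. -/
lemma itD_open {s : Set ℝ} (hs : IsOpen s) (n : ℕ) (f : ℝ → ℝ) :
    ∀ x ∈ s, iteratedDerivWithin n f s x = iteratedDeriv n f x := by
  induction n with
  | zero => intro x hx; simp
  | succ n ih =>
    intro x hx
    rw [iteratedDerivWithin_succ, iteratedDeriv_succ]
    rw [derivWithin_congr (fun y hy => ih y hy) (ih x hx)]
    exact derivWithin_of_isOpen hs hx

/-- Pointwise sum rule for iterated derivatives of functions smooth on an open set. -/
lemma itD_add {s : Set ℝ} (hs : IsOpen s) {x : ℝ} (hx : x ∈ s) {f g : ℝ → ℝ}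
    (hf : ContDiffOn ℝ ∞ f s) (hg : ContDiffOn ℝ ∞ g s) (n : ℕ) :
    iteratedDeriv n (fun y => f y + g y) x = iteratedDeriv n f x + iteratedDeriv n g x := by
  rw [← itD_open hs n f x hx, ← itD_open hs n g x hx, ← itD_open hs n _ x hx]
  exact iteratedDerivWithin_add hx hs.uniqueDiffOn
    ((hf x hx).of_le (by exact_mod_cast (le_top : (n : ℕ∞) ≤ ⊤)))
    ((hg x hx).of_le (by exact_mod_cast (le_top : (n : ℕ∞) ≤ ⊤)))

/-- If all derivatives of `g` up to order `n` vanish at `x`, so does the `n`-th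
derivative of `f * g` at `x`. -/
lemma itD_mul_vanish {s : Set ℝ} (hs : IsOpen s) (n : ℕ) :
    ∀ (f g : ℝ → ℝ), ContDiffOn ℝ ∞ f s → ContDiffOn ℝ ∞ g s → ∀ x ∈ s,
      (∀ m ≤ n, iteratedDeriv m g x = 0) →
      iteratedDeriv n (fun y => f y * g y) x = 0 := by
  induction n with
  | zero =>
    intro f g hf hg x hx h0
    have : g x = 0 := by simpa using h0 0 le_rfl
    simp [iteratedDeriv_zero, this]
  | succ n ih =>
    intro f g hf hg x hx h0
    have hf' : ContDiffOn ℝ ∞ (deriv f) s := hf.deriv_of_isOpen hs (by exact le_rfl)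
    have hg' : ContDiffOn ℝ ∞ (deriv g) s := hg.deriv_of_isOpen hs (by exact le_rfl)
    have heq : deriv (fun y => f y * g y) =ᶠ[nhds x]
        (fun y => deriv f y * g y + f y * deriv g y) := by
      filter_upwards [hs.mem_nhds hx] with y hy
      exact deriv_mul (hf.differentiableOn (by simp) |>.differentiableAt
        (hs.mem_nhds hy)) (hg.differentiableOn (by simp) |>.differentiableAt
        (hs.mem_nhds hy))
    rw [iteratedDeriv_succ', heq.iteratedDeriv_eq n,
      itD_add hs hx (hf'.mul hg) (hf.mul hg') n,
      ih (deriv f) g hf' hg x hx (fun m hm => h0 m (hm.trans (Nat.le_succ n))),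
      ih f (deriv g) hf hg' x hx (fun m hm => by
        rw [show iteratedDeriv m (deriv g) = iteratedDeriv (m+1) g from
          (iteratedDeriv_succ' (n := m) (f := g)).symm]
        exact h0 (m+1) (Nat.succ_le_succ hm))]
    simp

/-- If `f` is continuous near `x`, vanishes at `x` and has positive derivative just to the
right of `x`, then `f` is positive just to the right of `x`. -/
lemma pos_of_deriv_pos {s : Set ℝ} (hs : IsOpen s) {x : ℝ} (hx : x ∈ s) {f : ℝ → ℝ}
    (hf : ContinuousOn f s) (hfx : f x = 0) {ε₀ : ℝ} (hε₀ : 0 < ε₀)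
    (hd : ∀ y ∈ Ioo x (x + ε₀), 0 < deriv f y) :
    ∃ ε > 0, ∀ y ∈ Ioo x (x + ε), 0 < f y := by
  obtain ⟨δ, hδ, hball⟩ := Metric.isOpen_iff.mp hs x hx
  set ε := min ε₀ δ / 2 with hε
  have hεpos : 0 < ε := by positivity
  have hsub : Icc x (x + ε) ⊆ s := by
    intro y hy
    apply hball
    rw [Metric.mem_ball, Real.dist_eq, abs_of_nonneg (by linarith [hy.1])]
    have : y ≤ x + ε := hy.2
    have : ε < δ := by
      have := min_le_right ε₀ δ
      simp only [hε]; linarith [min_le_right ε₀ δ]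
    linarith [hy.2]
  have hmono : StrictMonoOn f (Icc x (x + ε)) := by
    apply strictMonoOn_of_deriv_pos (convex_Icc _ _) (hf.mono hsub)
    intro y hy
    rw [interior_Icc] at hy
    exact hd y ⟨hy.1, lt_of_lt_of_le hy.2 (by
      have := min_le_left ε₀ δ; simp only [hε]; linarith)⟩
  refine ⟨ε, hεpos, fun y hy => ?_⟩
  have := hmono (left_mem_Icc.mpr (by linarith)) ⟨le_of_lt hy.1, le_of_lt hy.2⟩ hy.1
  rwa [hfx] at this

/-- A smooth function whose derivatives up to order `n` vanish at `x` and whose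
`(n+1)`-st derivative at `x` is positive is positive just to the right of `x`. -/
lemma pos_right_of_derivs {s : Set ℝ} (hs : IsOpen s) (n : ℕ) :
    ∀ (f : ℝ → ℝ), ContDiffOn ℝ ∞ f s → ∀ x ∈ s,
      (∀ i ≤ n, iteratedDeriv i f x = 0) → 0 < iteratedDeriv (n + 1) f x →
      ∃ ε > 0, ∀ y ∈ Ioo x (x + ε), 0 < f y := by
  induction n with
  | zero =>
    intro f hf x hx h0 hpos
    have hfx : f x = 0 := by simpa using h0 0 le_rfl
    have hdx : 0 < deriv f x := by simpa [iteratedDeriv_succ, iteratedDeriv_zero] using hpos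
    have hf' : ContDiffOn ℝ ∞ (deriv f) s := hf.deriv_of_isOpen hs le_rfl
    have hcont : ContinuousAt (deriv f) x :=
      (hf'.continuousOn.continuousAt (hs.mem_nhds hx))
    have hev : ∀ᶠ y in nhds x, 0 < deriv f y := continuousAt_const.eventually_lt hcont ?_
    · obtain ⟨ε₀, hε₀, hball⟩ := Metric.eventually_nhds_iff_ball.mp hev
      refine pos_of_deriv_pos hs hx (hf.continuousOn) hfx hε₀ (fun y hy => hball y ?_)
      rw [Metric.mem_ball, Real.dist_eq, abs_of_nonneg (by linarith [hy.1])]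
      linarith [hy.2, hy.1]
    · exact hdx
  | succ n ih =>
    intro f hf x hx h0 hpos
    have hfx : f x = 0 := by simpa using h0 0 (Nat.zero_le _)
    have hf' : ContDiffOn ℝ ∞ (deriv f) s := hf.deriv_of_isOpen hs le_rfl
    have hder0 : ∀ i ≤ n, iteratedDeriv i (deriv f) x = 0 := fun i hi => by
      rw [show iteratedDeriv i (deriv f) = iteratedDeriv (i+1) f from
        (iteratedDeriv_succ' (n := i) (f := f)).symm]
      exact h0 (i+1) (Nat.succ_le_succ hi)
    have hderpos : 0 < iteratedDeriv (n + 1) (deriv f) x := by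
      rw [show iteratedDeriv (n+1) (deriv f) = iteratedDeriv (n+2) f from
        (iteratedDeriv_succ' (n := n+1) (f := f)).symm]
      exact hpos
    obtain ⟨ε₀, hε₀, hball⟩ := ih (deriv f) hf' x hx hder0 hderpos
    exact pos_of_deriv_pos hs hx hf.continuousOn hfx hε₀ hball

/-- At a finitely stable MOTS `ℓ*` where `θ⁺` vanishes to order `j − 1` and
`∂_ℓ^j θ⁺(ℓ*) > 0` (`j ≥ 1`), any smooth solution `k` of the reduced Jang equation
near `ℓ*` with `k(ℓ*) = −1` has `∂_ℓ k(ℓ*) = ⋯ = ∂_ℓ^j k(ℓ*) = 0` and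
`∂_ℓ^{j+1} k(ℓ*) > 0`; consequently `k > −1` just to the right of `ℓ*`. -/
theorem jang_stays_above_right_of_stable_mots (R Kl KR k : ℝ → ℝ) (U : Set ℝ)
    (hU : IsOpen U) (ℓs : ℝ) (hℓs : ℓs ∈ U)
    (hR : ContDiffOn ℝ (⊤ : ℕ∞) R U)
    (hKl : ContDiffOn ℝ (⊤ : ℕ∞) Kl U)
    (hKR : ContDiffOn ℝ (⊤ : ℕ∞) KR U)
    (hRpos : ∀ ℓ ∈ U, 0 < R ℓ)
    (j : ℕ) (hj : 1 ≤ j)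
    (hθlow : ∀ i < j, iteratedDeriv i (thetaPlus R KR) ℓs = 0)
    (hθj : 0 < iteratedDeriv j (thetaPlus R KR) ℓs)
    (hk : ContDiffOn ℝ (⊤ : ℕ∞) k U)
    (hode : ∀ ℓ ∈ U, deriv k ℓ = -(Kl ℓ) * k ℓ ^ 2 - Hf R ℓ * k ℓ + trKf Kl KR ℓ)
    (hkval : k ℓs = -1) :
    (∀ i, 1 ≤ i → i ≤ j → iteratedDeriv i k ℓs = 0) ∧
    0 < iteratedDeriv (j + 1) k ℓs ∧
    ∃ ε > 0, ∀ ℓ ∈ Set.Ioo ℓs (ℓs + ε), -1 < k ℓ := by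
  set θ := thetaPlus R KR with hθdef
  set w : ℝ → ℝ := fun ℓ => k ℓ + 1 with hwdef
  set a : ℝ → ℝ := fun ℓ => Kl ℓ * (1 - k ℓ) - Hf R ℓ with hadef
  have hR' : ContDiffOn ℝ ∞ (deriv R) U := hR.deriv_of_isOpen hU le_rfl
  have hHf : ContDiffOn ℝ ∞ (Hf R) U :=
    (contDiffOn_const.mul hR').div hR (fun ℓ hℓ => (hRpos ℓ hℓ).ne')
  have hθs : ContDiffOn ℝ ∞ θ U := (contDiffOn_const.mul hKR).add hHf
  have hws : ContDiffOn ℝ ∞ w U := hk.add contDiffOn_const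
  have has : ContDiffOn ℝ ∞ a U := (hKl.mul (contDiffOn_const.sub hk)).sub hHf
  have haws : ContDiffOn ℝ ∞ (fun ℓ => a ℓ * w ℓ) U := has.mul hws
  have hodew : ∀ ℓ ∈ U, deriv w ℓ = a ℓ * w ℓ + θ ℓ := by
    intro ℓ hℓ
    have h1 : deriv w ℓ = deriv k ℓ := deriv_add_const 1
    rw [h1, hode ℓ hℓ]
    simp only [hadef, hwdef, hθdef, thetaPlus, trKf]
    ring
  have hev : deriv w =ᶠ[nhds ℓs] fun ℓ => a ℓ * w ℓ + θ ℓ := by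
    filter_upwards [hU.mem_nhds hℓs] with ℓ hℓ
    exact hodew ℓ hℓ
  have hw0 : w ℓs = 0 := by simp [hwdef, hkval]
  have key : ∀ i, i ≤ j → iteratedDeriv i w ℓs = 0 := by
    intro i
    induction i using Nat.strong_induction_on with
    | _ i IH =>
      intro hij
      cases i with
      | zero => simpa using hw0
      | succ m =>
        rw [iteratedDeriv_succ', hev.iteratedDeriv_eq m,
          show iteratedDeriv m (fun ℓ => a ℓ * w ℓ + θ ℓ) ℓs = _ from
            itD_add hU hℓs haws hθs m,
          itD_mul_vanish hU m a w has hws ℓs hℓs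
            (fun p hp => IH p (Nat.lt_succ_of_le hp)
              (le_trans hp (le_trans (Nat.le_succ m) hij))),
          hθlow m (lt_of_lt_of_le (Nat.lt_succ_self m) hij)]
        simp
  have hkey1 : 0 < iteratedDeriv (j + 1) w ℓs := by
    rw [iteratedDeriv_succ', hev.iteratedDeriv_eq j,
      show iteratedDeriv j (fun ℓ => a ℓ * w ℓ + θ ℓ) ℓs = _ from
        itD_add hU hℓs haws hθs j,
      itD_mul_vanish hU j a w has hws ℓs hℓs key]
    simpa using hθj
  have hwk : ∀ i, 1 ≤ i → iteratedDeriv i w ℓs = iteratedDeriv i k ℓs := by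
    intro i hi
    cases i with
    | zero => omega
    | succ m =>
      rw [iteratedDeriv_succ', iteratedDeriv_succ']
      congr 1
      funext y
      exact deriv_add_const 1
  refine ⟨fun i h1 h2 => ?_, ?_, ?_⟩
  · rw [← hwk i h1]; exact key i h2
  · rw [← hwk (j + 1) (by omega)]; exact hkey1
  · obtain ⟨ε, hε, hpos⟩ := pos_right_of_derivs hU j w hws ℓs hℓs key hkey1
    refine ⟨ε, hε, fun ℓ hℓ => ?_⟩
    have := hpos ℓ hℓ
    simp only [hwdef] at this
    linarith
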